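/- Let (X,d,A) be a metric pair and p ∈ [1,∞]. Then the p-Wasserstein distance W_p on D(X,A) is translation invariant if and only if the p-strengthened metric d_p(x,y) = min(d(x,y), ‖(d(x,A),d(y,A))‖_p) is a p-metric, i.e., d_p(x,y) ≤ ‖(d_p(x,z), d_p(z,y))‖_p for all x,y,z ∈ X. -/

import Mathlib

open scoped ENNReal
open Finsupp

/-- The `ℓᵖ` norm of a finite multiset of values in `[0,∞]`, for `p ∈ [1,∞]`. -/
noncomputable def lpNorm (p : ℝ≥0∞) (s : Multiset ℝ≥0∞) : ℝ≥0∞ :=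
  if p = ∞ then s.sup else (s.map (fun x => x ^ p.toReal)).sum ^ (1 / p.toReal)

/-- The `ℓᵖ` norm of a pair of values in `[0,∞]`. -/
noncomputable def lpPair (p : ℝ≥0∞) (a b : ℝ≥0∞) : ℝ≥0∞ := lpNorm p {a, b}

/-- A formal sum is supported in `A`. -/
def SuppIn {X : Type*} (A : Set X) (α : X →₀ ℕ) : Prop := ↑α.support ⊆ A

/-- Equality modulo `D(A)`: `α = β (mod D(A))`. -/
def DRel {X : Type*} (A : Set X) (α β : X →₀ ℕ) : Prop :=
  ∃ a b : X →₀ ℕ, SuppIn A a ∧ SuppIn A b ∧ α + a = β + b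

/-- `σ ∈ D(X × X)` is a matching between `α` and `β` (mod `D(A)`). -/
noncomputable def IsMatching {X : Type*} (A : Set X) (σ : X × X →₀ ℕ) (α β : X →₀ ℕ) : Prop :=
  DRel A (Finsupp.mapDomain Prod.fst σ) α ∧ DRel A (Finsupp.mapDomain Prod.snd σ) β

/-- The `p`-cost of a matching `σ` with respect to `d`. -/
noncomputable def matchCost {X : Type*} (d : X → X → ℝ≥0∞) (p : ℝ≥0∞) (σ : X × X →₀ ℕ) : ℝ≥0∞ :=
  lpNorm p (σ.toMultiset.map (fun z => d z.1 z.2))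

/-- The `p`-Wasserstein distance between persistence diagrams on `(X, d, A)`,
computed on representatives in the free commutative monoid `D(X) = (X →₀ ℕ)`. -/
noncomputable def Wp {X : Type*} (d : X → X → ℝ≥0∞) (A : Set X) (p : ℝ≥0∞)
    (α β : X →₀ ℕ) : ℝ≥0∞ :=
  ⨅ σ : {σ : X × X →₀ ℕ // IsMatching A σ α β}, matchCost d p σ.1

/-- Distance from a point to the subset `A` (infimum of distances, `∞` if `A = ∅`). -/
noncomputable def distToSet {X : Type*} (d : X → X → ℝ≥0∞) (A : Set X) (x : X) : ℝ≥0∞ :=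
  ⨅ a ∈ A, d x a

/-- The `p`-strengthening of `d` with respect to `A`. -/
noncomputable def pStrengthening {X : Type*} (d : X → X → ℝ≥0∞) (A : Set X) (p : ℝ≥0∞)
    (x x' : X) : ℝ≥0∞ :=
  min (d x x') (lpPair p (distToSet d A x) (distToSet d A x'))


/-! ### auxiliary lemmas on `lpNorm` and `lpPair` -/

namespace PDAux

lemma toReal_pos' {p : ℝ≥0∞} (hp : 1 ≤ p) (h : p ≠ ∞) : 0 < p.toReal := by
  have := ENNReal.toReal_mono h hp
  simpa using lt_of_lt_of_le one_pos (by simpa using this)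

lemma rpow_rpow_inv {r : ℝ} (hr : 0 < r) (a : ℝ≥0∞) : (a ^ r) ^ (1/r) = a := by
  rw [← ENNReal.rpow_mul, mul_one_div, div_self hr.ne', ENNReal.rpow_one]

lemma lpPair_top (a b : ℝ≥0∞) : lpPair ∞ a b = a ⊔ b := by
  simp [lpPair, lpNorm, Multiset.insert_eq_cons]

lemma lpPair_ne_top {p : ℝ≥0∞} (h : p ≠ ∞) (a b : ℝ≥0∞) :
    lpPair p a b = (a ^ p.toReal + b ^ p.toReal) ^ (1 / p.toReal) := by
  simp [lpPair, lpNorm, h, Multiset.insert_eq_cons]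

section lp
variable {p : ℝ≥0∞} (hp : 1 ≤ p)
include hp

lemma lpNorm_zero : lpNorm p 0 = 0 := by
  rcases eq_or_ne p ∞ with h | h
  · simp [lpNorm, h]
  · have hr := toReal_pos' hp h
    simp only [lpNorm, h, if_false, Multiset.map_zero, Multiset.sum_zero]
    exact ENNReal.zero_rpow_of_pos (by positivity)

lemma lpNorm_singleton (a : ℝ≥0∞) : lpNorm p {a} = a := by
  rcases eq_or_ne p ∞ with h | h
  · simp [lpNorm, h]
  · have hr := toReal_pos' hp h
    simp only [lpNorm, h, if_false, Multiset.map_singleton, Multiset.sum_singleton]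
    rw [← ENNReal.rpow_mul, mul_one_div, div_self hr.ne', ENNReal.rpow_one]

lemma lpNorm_add (s t : Multiset ℝ≥0∞) :
    lpNorm p (s + t) = lpPair p (lpNorm p s) (lpNorm p t) := by
  rcases eq_or_ne p ∞ with h | h
  · simp only [lpPair, lpNorm, h, if_true, Multiset.sup_add, Multiset.insert_eq_cons,
      Multiset.sup_cons, Multiset.sup_singleton]
  · have hr := toReal_pos' hp h
    simp only [lpPair, lpNorm, h, if_false, Multiset.map_add, Multiset.sum_add,
      Multiset.insert_eq_cons, Multiset.map_cons, Multiset.map_singleton,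
      Multiset.sum_cons, Multiset.sum_singleton]
    rw [← ENNReal.rpow_mul, ← ENNReal.rpow_mul, one_div_mul_cancel hr.ne', ENNReal.rpow_one,
      ENNReal.rpow_one]

lemma lpNorm_cons (a : ℝ≥0∞) (s : Multiset ℝ≥0∞) :
    lpNorm p (a ::ₘ s) = lpPair p a (lpNorm p s) := by
  have h : a ::ₘ s = ({a} : Multiset ℝ≥0∞) + s := by simp
  rw [h, lpNorm_add hp, lpNorm_singleton hp]

lemma lpPair_comm (a b : ℝ≥0∞) : lpPair p a b = lpPair p b a := by
  rcases eq_or_ne p ∞ with h | h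
  · subst h; rw [lpPair_top, lpPair_top, sup_comm]
  · rw [lpPair_ne_top h, lpPair_ne_top h, add_comm]

lemma lpPair_zero_right (a : ℝ≥0∞) : lpPair p a 0 = a := by
  rcases eq_or_ne p ∞ with h | h
  · subst h; simp [lpPair_top]
  · have hr := toReal_pos' hp h
    rw [lpPair_ne_top h, ENNReal.zero_rpow_of_pos hr, add_zero, rpow_rpow_inv hr]

lemma lpPair_zero_left (a : ℝ≥0∞) : lpPair p 0 a = a := by
  rw [lpPair_comm hp, lpPair_zero_right hp]

lemma lpPair_mono {a a' b b' : ℝ≥0∞} (ha : a ≤ a') (hb : b ≤ b') :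
    lpPair p a b ≤ lpPair p a' b' := by
  rcases eq_or_ne p ∞ with h | h
  · subst h; rw [lpPair_top, lpPair_top]; exact sup_le_sup ha hb
  · have hr := toReal_pos' hp h
    rw [lpPair_ne_top h, lpPair_ne_top h]
    exact ENNReal.rpow_le_rpow (add_le_add (ENNReal.rpow_le_rpow ha hr.le)
      (ENNReal.rpow_le_rpow hb hr.le)) (by positivity)

lemma le_lpPair_left (a b : ℝ≥0∞) : a ≤ lpPair p a b := by
  rcases eq_or_ne p ∞ with h | h
  · subst h; rw [lpPair_top]; exact le_sup_left
  · have hr := toReal_pos' hp h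
    rw [lpPair_ne_top h]
    calc a = (a ^ p.toReal) ^ (1/p.toReal) := (rpow_rpow_inv hr a).symm
    _ ≤ _ := ENNReal.rpow_le_rpow (le_add_right le_rfl) (by positivity)

lemma le_lpPair_right (a b : ℝ≥0∞) : b ≤ lpPair p a b := by
  rw [lpPair_comm hp]; exact le_lpPair_left hp b a

lemma lpPair_top_left (b : ℝ≥0∞) : lpPair p ∞ b = ∞ := by
  rcases eq_or_ne p ∞ with h | h
  · subst h; simp [lpPair_top]
  · have hr := toReal_pos' hp h
    rw [lpPair_ne_top h, ENNReal.top_rpow_of_pos hr, top_add,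
      ENNReal.top_rpow_of_pos (by positivity)]

lemma lpPair_top_right (b : ℝ≥0∞) : lpPair p b ∞ = ∞ := by
  rw [lpPair_comm hp]; exact lpPair_top_left hp b

lemma lpPair_iInf_left {ι : Sort*} [Nonempty ι] (f : ι → ℝ≥0∞) (c : ℝ≥0∞) :
    lpPair p (⨅ i, f i) c = ⨅ i, lpPair p (f i) c := by
  rcases eq_or_ne p ∞ with h | h
  · subst h; simp only [lpPair_top]; exact iInf_sup_eq f c
  · have hr := toReal_pos' hp h
    simp only [lpPair_ne_top h]
    have h1 : (⨅ i, f i) ^ p.toReal = ⨅ i, (f i) ^ p.toReal :=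
      (ENNReal.orderIsoRpow p.toReal hr).map_iInf f
    rw [h1, ENNReal.iInf_add]
    exact (ENNReal.orderIsoRpow (1/p.toReal) (by positivity)).map_iInf _

lemma lpPair_iInf_right {ι : Sort*} [Nonempty ι] (f : ι → ℝ≥0∞) (c : ℝ≥0∞) :
    lpPair p c (⨅ i, f i) = ⨅ i, lpPair p c (f i) := by
  rw [lpPair_comm hp, lpPair_iInf_left hp]
  exact iInf_congr fun i => lpPair_comm hp _ _

lemma lpNorm_mono {s t : Multiset ℝ≥0∞} (h : s ≤ t) : lpNorm p s ≤ lpNorm p t := by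
  obtain ⟨u, rfl⟩ := Multiset.le_iff_exists_add.mp h
  rw [lpNorm_add hp]
  exact le_lpPair_left hp _ _

lemma lpNorm_eq_zero_of {s : Multiset ℝ≥0∞} (h : ∀ a ∈ s, a = 0) : lpNorm p s = 0 := by
  rcases eq_or_ne p ∞ with hg | hg
  · simp only [lpNorm, hg, if_true]
    exact le_antisymm (Multiset.sup_le.mpr fun a ha => (h a ha).le) bot_le
  · have hr := toReal_pos' hp hg
    simp only [lpNorm, hg, if_false]
    rw [Multiset.sum_eq_zero, ENNReal.zero_rpow_of_pos (by positivity)]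
    intro x hx
    obtain ⟨a, ha, rfl⟩ := Multiset.mem_map.mp hx
    rw [h a ha, ENNReal.zero_rpow_of_pos hr]

lemma lpNorm_map_mono {Y : Type*} (m : Multiset Y) {f g : Y → ℝ≥0∞}
    (h : ∀ y ∈ m, f y ≤ g y) : lpNorm p (m.map f) ≤ lpNorm p (m.map g) := by
  induction m using Multiset.induction with
  | empty => simp
  | cons a s ih =>
    rw [Multiset.map_cons, Multiset.map_cons, lpNorm_cons hp, lpNorm_cons hp]
    exact lpPair_mono hp (h a (Multiset.mem_cons_self a s))
      (ih fun y hy => h y (Multiset.mem_cons_of_mem hy))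

lemma lpPair_left_comm (a b c : ℝ≥0∞) :
    lpPair p a (lpPair p b c) = lpPair p b (lpPair p a c) := by
  have e : ∀ x y z : ℝ≥0∞, lpPair p x (lpPair p y z) = lpNorm p (x ::ₘ y ::ₘ {z}) := by
    intro x y z
    rw [lpNorm_cons hp, lpNorm_cons hp, lpNorm_singleton hp]
  rw [e, e, Multiset.cons_swap]

lemma lpPair_assoc (a b c : ℝ≥0∞) :
    lpPair p (lpPair p a b) c = lpPair p a (lpPair p b c) := by
  have e1 : lpPair p (lpPair p a b) c = lpPair p c (lpPair p a b) := lpPair_comm hp _ _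
  rw [e1]
  have e : ∀ x y z : ℝ≥0∞, lpPair p x (lpPair p y z) = lpNorm p (x ::ₘ y ::ₘ {z}) := by
    intro x y z
    rw [lpNorm_cons hp, lpNorm_cons hp, lpNorm_singleton hp]
  have : lpPair p a b = lpNorm p (a ::ₘ {b}) := by
    rw [lpNorm_cons hp, lpNorm_singleton hp]
  rw [this, ← lpNorm_cons hp, e]
  congr 1
  rw [Multiset.cons_swap c a]
  congr 1
  exact Multiset.cons_swap c b 0

end lp
end PDAux

namespace PDAux

variable {X : Type*} {A : Set X} {p : ℝ≥0∞}

/-! ### `DRel` basics -/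

lemma suppIn_zero : SuppIn A (0 : X →₀ ℕ) := by simp [SuppIn]

lemma suppIn_add {a b : X →₀ ℕ} (ha : SuppIn A a) (hb : SuppIn A b) : SuppIn A (a + b) := by
  classical
  intro x hx
  simp only [Finset.coe_subset, Finset.mem_coe] at *
  rcases Finset.mem_union.mp (Finsupp.support_add hx) with h | h
  · exact ha h
  · exact hb h

lemma suppIn_single {a : X} (ha : a ∈ A) : SuppIn A (Finsupp.single a 1) := by
  classical
  intro x hx
  simp only [Finset.mem_coe] at hx
  have := Finsupp.support_single_subset hx
  simp only [Finset.mem_singleton] at this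
  subst this; exact ha

lemma suppIn_apply_eq_zero {a : X →₀ ℕ} {u : X} (ha : SuppIn A a) (hu : u ∉ A) : a u = 0 := by
  by_contra h
  exact hu (ha (by simpa [Finsupp.mem_support_iff] using h))

lemma drel_refl (α : X →₀ ℕ) : DRel A α α := ⟨0, 0, suppIn_zero, suppIn_zero, rfl⟩

lemma drel_symm {α β : X →₀ ℕ} (h : DRel A α β) : DRel A β α := by
  obtain ⟨a, b, ha, hb, hab⟩ := h
  exact ⟨b, a, hb, ha, hab.symm⟩

lemma finsupp_add_left_cancel {f g h : X →₀ ℕ} (H : f + g = f + h) : g = h := by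
  ext a
  have := DFunLike.congr_fun H a
  simp only [Finsupp.add_apply] at this
  omega

lemma drel_trans {α β γ : X →₀ ℕ} (h1 : DRel A α β) (h2 : DRel A β γ) : DRel A α γ := by
  obtain ⟨a, b, ha, hb, hab⟩ := h1
  obtain ⟨c, e, hc, he, hce⟩ := h2
  refine ⟨a + c, e + b, suppIn_add ha hc, suppIn_add he hb, ?_⟩
  calc α + (a + c) = (α + a) + c := by rw [add_assoc]
  _ = (β + b) + c := by rw [hab]
  _ = (β + c) + b := by rw [add_assoc, add_comm b c, ← add_assoc]
  _ = (γ + e) + b := by rw [hce]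
  _ = γ + (e + b) := by rw [add_assoc]

lemma drel_add {α α' β β' : X →₀ ℕ} (h1 : DRel A α α') (h2 : DRel A β β') :
    DRel A (α + β) (α' + β') := by
  obtain ⟨a, b, ha, hb, hab⟩ := h1
  obtain ⟨c, e, hc, he, hce⟩ := h2
  refine ⟨a + c, b + e, suppIn_add ha hc, suppIn_add hb he, ?_⟩
  calc α + β + (a + c) = (α + a) + (β + c) := by abel
  _ = (α' + b) + (β' + e) := by rw [hab, hce]
  _ = α' + β' + (b + e) := by abel

lemma drel_add_single {α : X →₀ ℕ} {z : X} (hz : z ∈ A) :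
    DRel A (α + Finsupp.single z 1) α :=
  ⟨0, Finsupp.single z 1, suppIn_zero, suppIn_single hz, by rw [add_zero]⟩

lemma drel_cancel_single {φ α : X →₀ ℕ} {z : X}
    (h : DRel A (Finsupp.single z 1 + φ) (α + Finsupp.single z 1)) : DRel A φ α := by
  obtain ⟨a, b, ha, hb, hab⟩ := h
  refine ⟨a, b, ha, hb, ?_⟩
  apply finsupp_add_left_cancel (f := Finsupp.single z 1)
  calc Finsupp.single z 1 + (φ + a) = (Finsupp.single z 1 + φ) + a := by rw [add_assoc]
  _ = (α + Finsupp.single z 1) + b := hab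
  _ = Finsupp.single z 1 + (α + b) := by abel

/-! ### matchings and `Wp` basics -/

lemma isMatching_of_drel {σ : X × X →₀ ℕ} {α α' β β' : X →₀ ℕ}
    (h1 : DRel A α α') (h2 : DRel A β β') (h : IsMatching A σ α β) :
    IsMatching A σ α' β' :=
  ⟨drel_trans h.1 h1, drel_trans h.2 h2⟩

lemma Wp_le_cost (d : X → X → ℝ≥0∞) {σ : X × X →₀ ℕ} {α β : X →₀ ℕ}
    (h : IsMatching A σ α β) : Wp d A p α β ≤ matchCost d p σ :=
  iInf_le _ (⟨σ, h⟩ : {σ : X × X →₀ ℕ // IsMatching A σ α β})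

lemma Wp_congr (d : X → X → ℝ≥0∞) {α α' β β' : X →₀ ℕ}
    (h1 : DRel A α α') (h2 : DRel A β β') :
    Wp d A p α β = Wp d A p α' β' := by
  apply le_antisymm
  · exact le_iInf fun σ => Wp_le_cost d (isMatching_of_drel (drel_symm h1) (drel_symm h2) σ.2)
  · exact le_iInf fun σ => Wp_le_cost d (isMatching_of_drel h1 h2 σ.2)

lemma isMatching_add {σ τ : X × X →₀ ℕ} {α α' β β' : X →₀ ℕ}
    (h1 : IsMatching A σ α β) (h2 : IsMatching A τ α' β') :
    IsMatching A (σ + τ) (α + α') (β + β') := by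
  constructor
  · rw [Finsupp.mapDomain_add]; exact drel_add h1.1 h2.1
  · rw [Finsupp.mapDomain_add]; exact drel_add h1.2 h2.2

lemma matchCost_add (hp : 1 ≤ p) (d : X → X → ℝ≥0∞) (σ τ : X × X →₀ ℕ) :
    matchCost d p (σ + τ) = lpPair p (matchCost d p σ) (matchCost d p τ) := by
  rw [matchCost, Finsupp.toMultiset_add, Multiset.map_add, lpNorm_add hp]
  rfl

lemma Wp_add_le (hp : 1 ≤ p) (d : X → X → ℝ≥0∞) (α α' β β' : X →₀ ℕ) :
    Wp d A p (α + α') (β + β') ≤ lpPair p (Wp d A p α β) (Wp d A p α' β') := by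
  by_cases h1 : Nonempty {σ : X × X →₀ ℕ // IsMatching A σ α β}
  · by_cases h2 : Nonempty {σ : X × X →₀ ℕ // IsMatching A σ α' β'}
    · have key : lpPair p (Wp d A p α β) (Wp d A p α' β') =
          ⨅ σ : {σ : X × X →₀ ℕ // IsMatching A σ α β},
            ⨅ τ : {τ : X × X →₀ ℕ // IsMatching A τ α' β'},
              lpPair p (matchCost d p σ.1) (matchCost d p τ.1) := by
        unfold Wp
        rw [lpPair_iInf_left hp]
        exact iInf_congr fun σ => lpPair_iInf_right hp _ _
      rw [key]
      refine le_iInf fun σ => le_iInf fun τ => ?_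
      rw [← matchCost_add hp]
      exact Wp_le_cost d (isMatching_add σ.2 τ.2)
    · have h2' := not_nonempty_iff.mp h2
      have : Wp d A p α' β' = ∞ := by rw [Wp, iInf_of_empty]
      rw [this, lpPair_top_right hp]
      exact le_top
  · have h1' := not_nonempty_iff.mp h1
    have : Wp d A p α β = ∞ := by rw [Wp, iInf_of_empty]
    rw [this, lpPair_top_left hp]
    exact le_top

end PDAux

namespace PDAux

variable {X : Type*} {A : Set X} {p : ℝ≥0∞}

lemma le_lpNorm_of_mem (hp : 1 ≤ p) {a : ℝ≥0∞} {s : Multiset ℝ≥0∞} (h : a ∈ s) :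
    a ≤ lpNorm p s := by
  obtain ⟨t, rfl⟩ := Multiset.exists_cons_of_mem h
  rw [lpNorm_cons hp]
  exact le_lpPair_left hp _ _

lemma toM_mapDomain {Y Z : Type*} (σ : Y →₀ ℕ) (g : Y → Z) :
    Finsupp.toMultiset (Finsupp.mapDomain g σ) = σ.toMultiset.map g :=
  (Finsupp.toMultiset_map σ g).symm

lemma count_map [DecidableEq X] (σ : X × X →₀ ℕ) (g : X × X → X) (z : X) :
    Multiset.count z (σ.toMultiset.map g) = (Finsupp.mapDomain g σ) z := by
  rw [← toM_mapDomain, Finsupp.count_toMultiset]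

lemma fst_ne_zero_of_mem {σ : X × X →₀ ℕ} {v w : X} (h : (v, w) ∈ σ.toMultiset) :
    (Finsupp.mapDomain Prod.fst σ) v ≠ 0 := by
  classical
  rw [← count_map]
  have hv : v ∈ σ.toMultiset.map Prod.fst := Multiset.mem_map_of_mem _ h
  simpa [Multiset.count_ne_zero] using hv

lemma snd_ne_zero_of_mem {σ : X × X →₀ ℕ} {v w : X} (h : (v, w) ∈ σ.toMultiset) :
    (Finsupp.mapDomain Prod.snd σ) w ≠ 0 := by
  classical
  rw [← count_map]
  have hv : w ∈ σ.toMultiset.map Prod.snd := Multiset.mem_map_of_mem _ h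
  simpa [Multiset.count_ne_zero] using hv

lemma exists_pair_fst {σ : X × X →₀ ℕ} {z : X} (h : (Finsupp.mapDomain Prod.fst σ) z ≠ 0) :
    ∃ w, (z, w) ∈ σ.toMultiset := by
  classical
  have hz : z ∈ σ.toMultiset.map Prod.fst := by
    rw [← Multiset.count_ne_zero, count_map]; exact h
  obtain ⟨q, hq, hq1⟩ := Multiset.mem_map.mp hz
  exact ⟨q.2, by rwa [show (z, q.2) = q from Prod.ext hq1.symm rfl]⟩

lemma exists_pair_snd {σ : X × X →₀ ℕ} {z : X} (h : (Finsupp.mapDomain Prod.snd σ) z ≠ 0) :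
    ∃ v, (v, z) ∈ σ.toMultiset := by
  classical
  have hz : z ∈ σ.toMultiset.map Prod.snd := by
    rw [← Multiset.count_ne_zero, count_map]; exact h
  obtain ⟨q, hq, hq1⟩ := Multiset.mem_map.mp hz
  exact ⟨q.1, by rwa [show (q.1, z) = q from Prod.ext rfl hq1.symm]⟩

lemma drel_apply {φ χ : X →₀ ℕ} (h : DRel A φ χ) {v : X} (hv : v ∉ A) : φ v = χ v := by
  obtain ⟨a, b, ha, hb, hab⟩ := h
  have h1 := DFunLike.congr_fun hab v
  simpa only [Finsupp.add_apply, suppIn_apply_eq_zero ha hv, suppIn_apply_eq_zero hb hv,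
    add_zero] using h1

/-! ### `Wp` on single points -/

lemma Wp_self (hp : 1 ≤ p) (d : X → X → ℝ≥0∞) (hrefl : ∀ x, d x x = 0) (α : X →₀ ℕ) :
    Wp d A p α α = 0 := by
  refine le_antisymm ?_ zero_le
  have hcomp : (Prod.fst ∘ fun x : X => (x, x)) = id := rfl
  have hcomp2 : (Prod.snd ∘ fun x : X => (x, x)) = id := rfl
  have hm : IsMatching A (Finsupp.mapDomain (fun x => (x, x)) α) α α := by
    constructor
    · rw [← Finsupp.mapDomain_comp, hcomp, Finsupp.mapDomain_id]; exact drel_refl α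
    · rw [← Finsupp.mapDomain_comp, hcomp2, Finsupp.mapDomain_id]; exact drel_refl α
  refine (Wp_le_cost d hm).trans ?_
  rw [matchCost, toM_mapDomain, Multiset.map_map]
  refine le_of_eq (lpNorm_eq_zero_of hp ?_)
  intro a ha
  obtain ⟨x, hx, rfl⟩ := Multiset.mem_map.mp ha
  simpa using hrefl x

lemma Wp_single_pair_le (hp : 1 ≤ p) (d : X → X → ℝ≥0∞) (x y : X) :
    Wp d A p (Finsupp.single x 1) (Finsupp.single y 1) ≤ d x y := by
  have hm : IsMatching A (Finsupp.single (x, y) 1) (Finsupp.single x 1) (Finsupp.single y 1) := by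
    constructor
    · rw [Finsupp.mapDomain_single]; exact drel_refl _
    · rw [Finsupp.mapDomain_single]; exact drel_refl _
  refine (Wp_le_cost d hm).trans (le_of_eq ?_)
  rw [matchCost, Finsupp.toMultiset_single]
  simp only [one_smul, Multiset.map_singleton]
  exact lpNorm_singleton hp _

lemma Wp_single_zero (hp : 1 ≤ p) (d : X → X → ℝ≥0∞) (x : X) :
    Wp d A p (Finsupp.single x 1) 0 ≤ distToSet d A x := by
  rw [distToSet]
  refine le_iInf₂ fun a ha => ?_
  have hm : IsMatching A (Finsupp.single (x, a) 1) (Finsupp.single x 1) 0 := by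
    constructor
    · rw [Finsupp.mapDomain_single]; exact drel_refl _
    · rw [Finsupp.mapDomain_single]
      exact ⟨0, Finsupp.single a 1, suppIn_zero, suppIn_single ha, by rw [add_zero, zero_add]⟩
  refine (Wp_le_cost d hm).trans (le_of_eq ?_)
  rw [matchCost, Finsupp.toMultiset_single]
  simp only [one_smul, Multiset.map_singleton]
  exact lpNorm_singleton hp _

lemma Wp_zero_single (hp : 1 ≤ p) (d : X → X → ℝ≥0∞) (hsymm : ∀ x y, d x y = d y x) (y : X) :
    Wp d A p 0 (Finsupp.single y 1) ≤ distToSet d A y := by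
  rw [distToSet]
  refine le_iInf₂ fun a ha => ?_
  have hm : IsMatching A (Finsupp.single (a, y) 1) 0 (Finsupp.single y 1) := by
    constructor
    · rw [Finsupp.mapDomain_single]
      exact ⟨0, Finsupp.single a 1, suppIn_zero, suppIn_single ha, by rw [add_zero, zero_add]⟩
    · rw [Finsupp.mapDomain_single]; exact drel_refl _
  refine (Wp_le_cost d hm).trans (le_of_eq ?_)
  rw [matchCost, Finsupp.toMultiset_single]
  simp only [one_smul, Multiset.map_singleton]
  rw [lpNorm_singleton hp]
  exact hsymm a y

lemma Wp_single_le_dp (hp : 1 ≤ p) (d : X → X → ℝ≥0∞) (hsymm : ∀ x y, d x y = d y x) (x y : X) :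
    Wp d A p (Finsupp.single x 1) (Finsupp.single y 1) ≤ pStrengthening d A p x y := by
  refine le_min (Wp_single_pair_le hp d x y) ?_
  calc Wp d A p (Finsupp.single x 1) (Finsupp.single y 1)
      = Wp d A p (Finsupp.single x 1 + 0) (0 + Finsupp.single y 1) := by rw [add_zero, zero_add]
  _ ≤ lpPair p (Wp d A p (Finsupp.single x 1) 0) (Wp d A p 0 (Finsupp.single y 1)) :=
      Wp_add_le hp d _ _ _ _
  _ ≤ lpPair p (distToSet d A x) (distToSet d A y) :=
      lpPair_mono hp (Wp_single_zero hp d x) (Wp_zero_single hp d hsymm y)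

end PDAux

namespace PDAux

variable {X : Type*} {A : Set X} {p : ℝ≥0∞}

lemma dA_zero (d : X → X → ℝ≥0∞) (hrefl : ∀ x, d x x = 0) {u : X} (hu : u ∈ A) :
    distToSet d A u = 0 := by
  refine le_antisymm ?_ zero_le
  rw [distToSet]
  exact (iInf₂_le u hu).trans (hrefl u).le

lemma dp_le_matchCost (hp : 1 ≤ p) (d : X → X → ℝ≥0∞) (hrefl : ∀ x, d x x = 0)
    (hsymm : ∀ x y, d x y = d y x) {x y : X} {σ : X × X →₀ ℕ}
    (h : IsMatching A σ (Finsupp.single x 1) (Finsupp.single y 1)) :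
    pStrengthening d A p x y ≤ matchCost d p σ := by
  classical
  obtain ⟨h1, h2⟩ := h
  have dpx : ∀ w ∈ A, distToSet d A x ≤ d x w := by
    intro w hw; rw [distToSet]; exact iInf₂_le w hw
  have dpy : ∀ v ∈ A, distToSet d A y ≤ d v y := by
    intro v hv; rw [hsymm v y, distToSet]; exact iInf₂_le v hv
  have cost_one : ∀ q ∈ σ.toMultiset, d q.1 q.2 ≤ matchCost d p σ := by
    intro q hq
    rw [matchCost]
    exact le_lpNorm_of_mem hp (Multiset.mem_map_of_mem _ hq)
  have cost_two : ∀ q q' : X × X, q ∈ σ.toMultiset → q' ∈ σ.toMultiset.erase q →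
      lpPair p (d q.1 q.2) (d q'.1 q'.2) ≤ matchCost d p σ := by
    intro q q' hq hq'
    have hdec : σ.toMultiset = q ::ₘ q' ::ₘ ((σ.toMultiset.erase q).erase q') := by
      rw [Multiset.cons_erase hq', Multiset.cons_erase hq]
    rw [matchCost, hdec, Multiset.map_cons, Multiset.map_cons, lpNorm_cons hp, lpNorm_cons hp]
    exact lpPair_mono hp le_rfl (le_lpPair_left hp _ _)
  by_cases hx : x ∈ A
  · by_cases hy : y ∈ A
    · have h0 : pStrengthening d A p x y ≤ 0 := by
        refine (min_le_right _ _).trans ?_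
        rw [dA_zero d hrefl hx, dA_zero d hrefl hy, lpPair_zero_left hp]
      exact h0.trans zero_le
    · have hGy : (Finsupp.mapDomain Prod.snd σ) y = 1 := by
        rw [drel_apply h2 hy, Finsupp.single_eq_same]
      obtain ⟨v, hv⟩ := exists_pair_snd (by rw [hGy]; omega)
      have hvA : v ∈ A := by
        by_contra hvA
        have hFv := drel_apply h1 hvA
        have hne := fst_ne_zero_of_mem hv
        rw [hFv] at hne
        have hxv : x = v := by
          by_contra hxv
          exact hne (Finsupp.single_eq_of_ne' hxv)
        exact hvA (hxv ▸ hx)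
      calc pStrengthening d A p x y
          ≤ lpPair p (distToSet d A x) (distToSet d A y) := min_le_right _ _
      _ = distToSet d A y := by rw [dA_zero d hrefl hx, lpPair_zero_left hp]
      _ ≤ d v y := dpy v hvA
      _ ≤ matchCost d p σ := cost_one (v, y) hv
  · have hFx : (Finsupp.mapDomain Prod.fst σ) x = 1 := by
      rw [drel_apply h1 hx, Finsupp.single_eq_same]
    obtain ⟨w, hw⟩ := exists_pair_fst (z := x) (by rw [hFx]; omega)
    have hwcases : w ∈ A ∨ w = y := by
      by_contra hc
      push_neg at hc
      have hGw := drel_apply h2 hc.1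
      have hne := snd_ne_zero_of_mem hw
      rw [hGw] at hne
      have hyw : y = w := by
        by_contra hyw
        exact hne (Finsupp.single_eq_of_ne' hyw)
      exact hc.2 hyw.symm
    rcases hwcases with hwA | hwy
    · by_cases hy : y ∈ A
      · calc pStrengthening d A p x y
            ≤ lpPair p (distToSet d A x) (distToSet d A y) := min_le_right _ _
        _ = distToSet d A x := by rw [dA_zero d hrefl hy, lpPair_zero_right hp]
        _ ≤ d x w := dpx w hwA
        _ ≤ matchCost d p σ := cost_one (x, w) hw
      · have hGy : (Finsupp.mapDomain Prod.snd σ) y = 1 := by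
          rw [drel_apply h2 hy, Finsupp.single_eq_same]
        obtain ⟨v, hv⟩ := exists_pair_snd (by rw [hGy]; omega)
        have hvA : v ∈ A := by
          by_contra hvA
          have hFv := drel_apply h1 hvA
          have hne := fst_ne_zero_of_mem hv
          rw [hFv] at hne
          have hxv : x = v := by
            by_contra hxv
            exact hne (Finsupp.single_eq_of_ne' hxv)
          subst hxv
          -- now (x, y) ∈ m and (x, w) ∈ m with w ≠ y : count contradiction
          have hwy : w ≠ y := fun hwy => hy (hwy ▸ hwA)
          have hne2 : (x, y) ≠ (x, w) := fun hq => hwy (congrArg Prod.snd hq).symm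
          have hv' : (x, y) ∈ σ.toMultiset.erase (x, w) :=
            (Multiset.mem_erase_of_ne hne2).mpr hv
          have hdec : σ.toMultiset =
              (x, w) ::ₘ (x, y) ::ₘ ((σ.toMultiset.erase (x, w)).erase (x, y)) := by
            rw [Multiset.cons_erase hv', Multiset.cons_erase hw]
          have hcount := count_map σ Prod.fst x
          rw [hFx, hdec] at hcount
          simp only [Multiset.map_cons, Multiset.count_cons_self] at hcount
          omega
        have hne2 : (v, y) ≠ (x, w) := by
          intro hq
          have hvx : v = x := congrArg Prod.fst hq
          exact hx (hvx ▸ hvA)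
        have hv' : (v, y) ∈ σ.toMultiset.erase (x, w) :=
          (Multiset.mem_erase_of_ne hne2).mpr hv
        calc pStrengthening d A p x y
            ≤ lpPair p (distToSet d A x) (distToSet d A y) := min_le_right _ _
        _ ≤ lpPair p (d x w) (d v y) := lpPair_mono hp (dpx w hwA) (dpy v hvA)
        _ = lpPair p (d v y) (d x w) := lpPair_comm hp _ _
        _ ≤ matchCost d p σ := cost_two (v, y) (x, w) hv (by
              rwa [Multiset.mem_erase_of_ne (Ne.symm hne2)])
    · calc pStrengthening d A p x y ≤ d x y := min_le_left _ _
      _ ≤ matchCost d p σ := cost_one (x, y) (hwy ▸ hw)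

lemma Wp_single_eq (hp : 1 ≤ p) (d : X → X → ℝ≥0∞) (hrefl : ∀ x, d x x = 0)
    (hsymm : ∀ x y, d x y = d y x) (x y : X) :
    Wp d A p (Finsupp.single x 1) (Finsupp.single y 1) = pStrengthening d A p x y := by
  refine le_antisymm (Wp_single_le_dp hp d hsymm x y) ?_
  exact le_iInf fun σ => dp_le_matchCost hp d hrefl hsymm σ.2

end PDAux

namespace PDAux

variable {X : Type*} {A : Set X} {p : ℝ≥0∞}

lemma toMultiset_surj {Y : Type*} (m : Multiset Y) :
    ∃ f : Y →₀ ℕ, Finsupp.toMultiset f = m := by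
  classical
  exact ⟨Multiset.toFinsupp m, Multiset.toFinsupp_toMultiset m⟩

lemma toMultiset_inj {Y : Type*} {f g : Y →₀ ℕ}
    (h : Finsupp.toMultiset f = Finsupp.toMultiset g) : f = g := by
  classical
  have h2 := congrArg Multiset.toFinsupp h
  simpa using h2

lemma Wp_zero_zero_le (hp : 1 ≤ p) (d : X → X → ℝ≥0∞) : Wp d A p (0 : X →₀ ℕ) 0 ≤ 0 := by
  have hm : IsMatching A 0 (0 : X →₀ ℕ) 0 := by
    constructor <;> (rw [Finsupp.mapDomain_zero]; exact drel_refl 0)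
  refine (Wp_le_cost d hm).trans (le_of_eq ?_)
  rw [matchCost]
  simp only [Finsupp.toMultiset_zero, Multiset.map_zero]
  exact lpNorm_zero hp

lemma Wp_le_lpNorm (hp : 1 ≤ p) (d d' : X → X → ℝ≥0∞)
    (hle : ∀ x y, Wp d A p (Finsupp.single x 1) (Finsupp.single y 1) ≤ d' x y) :
    ∀ m : Multiset (X × X), ∀ α β : X →₀ ℕ,
      Finsupp.toMultiset α = m.map Prod.fst → Finsupp.toMultiset β = m.map Prod.snd →
      Wp d A p α β ≤ lpNorm p (m.map fun z => d' z.1 z.2) := by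
  intro m
  induction m using Multiset.induction with
  | empty =>
    intro α β hα hβ
    have hα0 : α = 0 := toMultiset_inj (by simpa using hα)
    have hβ0 : β = 0 := toMultiset_inj (by simpa using hβ)
    subst hα0; subst hβ0
    simp only [Multiset.map_zero]
    rw [lpNorm_zero hp]
    exact Wp_zero_zero_le hp d
  | cons q m ih =>
    obtain ⟨a, b⟩ := q
    intro α β hα hβ
    obtain ⟨α', hα'⟩ := toMultiset_surj (m.map Prod.fst)
    obtain ⟨β', hβ'⟩ := toMultiset_surj (m.map Prod.snd)
    have hαeq : α = Finsupp.single a 1 + α' := toMultiset_inj (by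
      rw [hα, Finsupp.toMultiset_add, Finsupp.toMultiset_single, one_smul, hα',
        Multiset.map_cons, Multiset.singleton_add])
    have hβeq : β = Finsupp.single b 1 + β' := toMultiset_inj (by
      rw [hβ, Finsupp.toMultiset_add, Finsupp.toMultiset_single, one_smul, hβ',
        Multiset.map_cons, Multiset.singleton_add])
    subst hαeq; subst hβeq
    rw [Multiset.map_cons, lpNorm_cons hp]
    dsimp only
    refine (Wp_add_le hp d _ _ _ _).trans ?_
    exact lpPair_mono hp (hle a b) (ih α' β' hα' hβ')

lemma Wp_eq_Wp_dp (hp : 1 ≤ p) (d : X → X → ℝ≥0∞) (hsymm : ∀ x y, d x y = d y x)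
    (α β : X →₀ ℕ) :
    Wp d A p α β = Wp (pStrengthening d A p) A p α β := by
  apply le_antisymm
  · refine le_iInf fun σ => ?_
    obtain ⟨h1, h2⟩ := σ.2
    have key := Wp_le_lpNorm hp d (pStrengthening d A p)
      (fun x y => Wp_single_le_dp hp d hsymm x y) σ.1.toMultiset
      (Finsupp.mapDomain Prod.fst σ.1) (Finsupp.mapDomain Prod.snd σ.1)
      (toM_mapDomain σ.1 Prod.fst) (toM_mapDomain σ.1 Prod.snd)
    exact (le_of_eq (Wp_congr d (drel_symm h1) (drel_symm h2))).trans key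
  · refine le_iInf fun σ => ?_
    refine (Wp_le_cost (pStrengthening d A p) σ.2).trans ?_
    rw [matchCost, matchCost]
    exact lpNorm_map_mono hp _ (fun q hq => min_le_left _ _)

lemma Wp_step (hp : 1 ≤ p) (d' : X → X → ℝ≥0∞)
    (hpm : ∀ x y z, d' x y ≤ lpPair p (d' x z) (d' z y)) (z : X) (α β : X →₀ ℕ) :
    Wp d' A p α β ≤ Wp d' A p (α + Finsupp.single z 1) (β + Finsupp.single z 1) := by
  classical
  refine le_iInf fun ⟨σ, hσ⟩ => ?_
  by_cases hz : z ∈ A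
  · exact Wp_le_cost d' (isMatching_of_drel (drel_add_single hz) (drel_add_single hz) hσ)
  · obtain ⟨h1, h2⟩ := hσ
    have hFz : (Finsupp.mapDomain Prod.fst σ) z ≠ 0 := by
      rw [drel_apply h1 hz]
      simp [Finsupp.add_apply, Finsupp.single_eq_same]
    have hGz : (Finsupp.mapDomain Prod.snd σ) z ≠ 0 := by
      rw [drel_apply h2 hz]
      simp [Finsupp.add_apply, Finsupp.single_eq_same]
    obtain ⟨w, hw⟩ := exists_pair_fst hFz
    obtain ⟨v, hv⟩ := exists_pair_snd hGz
    by_cases hd : (v, z) = (z, w)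
    · -- the pair (z,z) occurs in σ
      have hzz : (z, z) ∈ σ.toMultiset := by
        have hv1 : v = z := congrArg Prod.fst hd
        rwa [hv1] at hv
      obtain ⟨rest, hdec⟩ : ∃ t, σ.toMultiset = (z, z) ::ₘ t :=
        ⟨_, (Multiset.cons_erase hzz).symm⟩
      obtain ⟨σ', hst⟩ := toMultiset_surj rest
      have efst : Finsupp.mapDomain Prod.fst σ
          = Finsupp.single z 1 + Finsupp.mapDomain Prod.fst σ' := by
        apply toMultiset_inj
        rw [Finsupp.toMultiset_add, toM_mapDomain, toM_mapDomain, hst, hdec,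
          Finsupp.toMultiset_single, one_smul, Multiset.map_cons, Multiset.singleton_add]
      have esnd : Finsupp.mapDomain Prod.snd σ
          = Finsupp.single z 1 + Finsupp.mapDomain Prod.snd σ' := by
        apply toMultiset_inj
        rw [Finsupp.toMultiset_add, toM_mapDomain, toM_mapDomain, hst, hdec,
          Finsupp.toMultiset_single, one_smul, Multiset.map_cons, Multiset.singleton_add]
      have hm' : IsMatching A σ' α β :=
        ⟨drel_cancel_single (efst ▸ h1), drel_cancel_single (esnd ▸ h2)⟩
      refine (Wp_le_cost d' hm').trans ?_
      rw [matchCost, matchCost, hst, hdec, Multiset.map_cons, lpNorm_cons hp]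
      exact le_lpPair_right hp _ _
    · have hv' : (v, z) ∈ σ.toMultiset.erase (z, w) := (Multiset.mem_erase_of_ne hd).mpr hv
      obtain ⟨rest, hrest⟩ : ∃ t, σ.toMultiset.erase (z, w) = (v, z) ::ₘ t :=
        ⟨_, (Multiset.cons_erase hv').symm⟩
      have hdec : σ.toMultiset = (z, w) ::ₘ (v, z) ::ₘ rest := by
        rw [← hrest, Multiset.cons_erase hw]
      obtain ⟨σ', hst⟩ := toMultiset_surj ((v, w) ::ₘ rest)
      have efst : Finsupp.mapDomain Prod.fst σ
          = Finsupp.single z 1 + Finsupp.mapDomain Prod.fst σ' := by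
        apply toMultiset_inj
        rw [Finsupp.toMultiset_add, toM_mapDomain, toM_mapDomain, hst, hdec,
          Finsupp.toMultiset_single, one_smul, Multiset.map_cons, Multiset.map_cons,
          Multiset.map_cons, Multiset.singleton_add]
      have esnd : Finsupp.mapDomain Prod.snd σ
          = Finsupp.single z 1 + Finsupp.mapDomain Prod.snd σ' := by
        apply toMultiset_inj
        rw [Finsupp.toMultiset_add, toM_mapDomain, toM_mapDomain, hst, hdec,
          Finsupp.toMultiset_single, one_smul, Multiset.map_cons, Multiset.map_cons,
          Multiset.map_cons, Multiset.singleton_add]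
        rw [Multiset.cons_swap]
      have hm' : IsMatching A σ' α β :=
        ⟨drel_cancel_single (efst ▸ h1), drel_cancel_single (esnd ▸ h2)⟩
      refine (Wp_le_cost d' hm').trans ?_
      rw [matchCost, matchCost, hst, hdec]
      simp only [Multiset.map_cons]
      rw [lpNorm_cons hp, lpNorm_cons hp, lpNorm_cons hp]
      refine (lpPair_mono hp (hpm v w z) le_rfl).trans ?_
      rw [lpPair_assoc hp, lpPair_left_comm hp]

lemma Wp_translate_ge (hp : 1 ≤ p) (d' : X → X → ℝ≥0∞)
    (hpm : ∀ x y z, d' x y ≤ lpPair p (d' x z) (d' z y)) (γ α β : X →₀ ℕ) :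
    Wp d' A p α β ≤ Wp d' A p (α + γ) (β + γ) := by
  have key : ∀ n : Multiset X, ∀ γ : X →₀ ℕ, Finsupp.toMultiset γ = n → ∀ α β : X →₀ ℕ,
      Wp d' A p α β ≤ Wp d' A p (α + γ) (β + γ) := by
    intro n
    induction n using Multiset.induction with
    | empty =>
      intro γ hγ α β
      have : γ = 0 := toMultiset_inj (by simpa using hγ)
      subst this
      simp only [add_zero]
      exact le_rfl
    | cons z n ih =>
      intro γ hγ α β
      obtain ⟨γ', hγ'⟩ := toMultiset_surj n
      have hγeq : γ = Finsupp.single z 1 + γ' := toMultiset_inj (by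
        rw [hγ, Finsupp.toMultiset_add, Finsupp.toMultiset_single, one_smul, hγ',
          Multiset.singleton_add])
      subst hγeq
      have e : ∀ δ : X →₀ ℕ, δ + (Finsupp.single z 1 + γ')
          = (δ + γ') + Finsupp.single z 1 := by
        intro δ; abel
      rw [e, e]
      exact (ih γ' hγ' α β).trans (Wp_step hp d' hpm z _ _)
  exact key γ.toMultiset γ rfl α β

end PDAux

/-- `W_p` on `D(X,A)` is translation invariant iff the
`p`-strengthened metric `d_p` is a `p`-metric. -/
theorem wasserstein_translation_invariant_iff_p_metric {X : Type*}
    (d : X → X → ℝ≥0∞)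
    (hrefl : ∀ x, d x x = 0)
    (hsymm : ∀ x y, d x y = d y x)
    (htri : ∀ x y z, d x y ≤ d x z + d z y)
    (A : Set X) (p : ℝ≥0∞) (hp : 1 ≤ p) :
    (∀ α β γ : X →₀ ℕ, Wp d A p (α + γ) (β + γ) = Wp d A p α β) ↔
    (∀ x y z : X, pStrengthening d A p x y ≤
      lpPair p (pStrengthening d A p x z) (pStrengthening d A p z y)) := by
  constructor
  · intro hTI x y z
    have e : ∀ u v : X, Wp d A p (Finsupp.single u 1) (Finsupp.single v 1)
        = pStrengthening d A p u v := fun u v => PDAux.Wp_single_eq hp d hrefl hsymm u v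
    calc pStrengthening d A p x y
        = Wp d A p (Finsupp.single x 1) (Finsupp.single y 1) := (e x y).symm
    _ = Wp d A p (Finsupp.single x 1 + Finsupp.single z 1)
          (Finsupp.single y 1 + Finsupp.single z 1) := (hTI _ _ _).symm
    _ = Wp d A p (Finsupp.single x 1 + Finsupp.single z 1)
          (Finsupp.single z 1 + Finsupp.single y 1) := by rw [add_comm (Finsupp.single y 1)]
    _ ≤ lpPair p (Wp d A p (Finsupp.single x 1) (Finsupp.single z 1))
          (Wp d A p (Finsupp.single z 1) (Finsupp.single y 1)) := PDAux.Wp_add_le hp d _ _ _ _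
    _ = lpPair p (pStrengthening d A p x z) (pStrengthening d A p z y) := by rw [e, e]
  · intro hpm α β γ
    apply le_antisymm
    · calc Wp d A p (α + γ) (β + γ)
          ≤ lpPair p (Wp d A p α β) (Wp d A p γ γ) := PDAux.Wp_add_le hp d _ _ _ _
      _ = Wp d A p α β := by rw [PDAux.Wp_self hp d hrefl, PDAux.lpPair_zero_right hp]
    · calc Wp d A p α β
          = Wp (pStrengthening d A p) A p α β := PDAux.Wp_eq_Wp_dp hp d hsymm α β
      _ ≤ Wp (pStrengthening d A p) A p (α + γ) (β + γ) :=
          PDAux.Wp_translate_ge hp _ hpm γ α β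
      _ = Wp d A p (α + γ) (β + γ) := (PDAux.Wp_eq_Wp_dp hp d hsymm _ _).symm
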